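/- Let k ≥ 1 be an integer and set l = k+3. Let Q be the additive subgroup of ℚ^{l+1} generated by R^{k+3}_k, and let P = {x ∈ ℚ^{l+1} : B(x, ω') = 0 and B(x, m) ∈ ℤ for every m ∈ R^{k+3}_k}. Then Q ⊆ P and the quotient group P/Q is finite of order k+4 (the index of connectedness of the root system A_{k+3}). -/

import Mathlib

/-- The symmetric bilinear form on `ℚ^{l+1}` with `B(e₀,e₀) = k`, `B(eᵢ,eᵢ) = -1` for
`1 ≤ i ≤ l`, and `B(eᵢ,eⱼ) = 0` for `i ≠ j`. -/
def bform (k l : ℕ) (v w : Fin (l + 1) → ℚ) : ℚ :=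
  ((k : ℚ) + 1) * (v 0 * w 0) - ∑ i, v i * w i

/-- The integral version of the bilinear form. -/
def bformZ (k l : ℕ) (v w : Fin (l + 1) → ℤ) : ℤ :=
  ((k : ℤ) + 1) * (v 0 * w 0) - ∑ i, v i * w i

/-- The vector `ω' = -(k+2)·e₀ + k·(e₁ + ⋯ + e_l)` over `ℚ`. -/
def omegaV (k l : ℕ) : Fin (l + 1) → ℚ :=
  fun i => if i = 0 then -((k : ℚ) + 2) else (k : ℚ)

/-- The vector `ω'` over `ℤ`. -/
def omegaZ (k l : ℕ) : Fin (l + 1) → ℤ :=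
  fun i => if i = 0 then -((k : ℤ) + 2) else (k : ℤ)

/-- The root system `R^l_k = {v ∈ ℤ^{l+1} : B(v,v) = -2, B(v,ω') = 0}`. -/
def rootSet (k l : ℕ) : Set (Fin (l + 1) → ℤ) :=
  {v | bformZ k l v v = -2 ∧ bformZ k l v (omegaZ k l) = 0}

/-- Coercion of an integral vector to a rational vector. -/
def ratOf (l : ℕ) (v : Fin (l + 1) → ℤ) : Fin (l + 1) → ℚ :=
  fun i => (v i : ℚ)

/-- The root lattice `Q`: the additive subgroup of `ℚ^{l+1}` generated by `R^l_k`. -/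
def rootLattice (k l : ℕ) : AddSubgroup (Fin (l + 1) → ℚ) :=
  AddSubgroup.closure (ratOf l '' rootSet k l)

/-- The weight lattice `P = {x ∈ ℚ^{l+1} : B(x,ω') = 0 and B(x,m) ∈ ℤ for all m ∈ R^l_k}`. -/
def weightLattice (k l : ℕ) : Set (Fin (l + 1) → ℚ) :=
  {x | bform k l x (omegaV k l) = 0 ∧
    ∀ m ∈ rootSet k l, ∃ n : ℤ, bform k l x (ratOf l m) = (n : ℚ)}

-- basic lemmas
lemma bformZ_omega (k l : ℕ) (v : Fin (l+1) → ℤ) :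
    bformZ k l v (omegaZ k l) = -(k:ℤ) * (((k:ℤ)+1) * v 0 + ∑ i, v i) := by
  have h : ∀ i, v i * omegaZ k l i
      = (k:ℤ) * v i - (if i = (0 : Fin (l+1)) then (2*(k:ℤ)+2) * v 0 else 0) := by
    intro i
    simp only [omegaZ]
    split_ifs with h1
    · subst h1; ring
    · ring
  rw [bformZ, Finset.sum_congr rfl (fun i _ => h i)]
  simp only [Finset.sum_sub_distrib, ← Finset.mul_sum,
    Finset.sum_ite_eq' Finset.univ (0 : Fin (l+1)), Finset.mem_univ, if_true, omegaZ]
  ring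

lemma bform_omega (k l : ℕ) (v : Fin (l+1) → ℚ) :
    bform k l v (omegaV k l) = -(k:ℚ) * (((k:ℚ)+1) * v 0 + ∑ i, v i) := by
  have h : ∀ i, v i * omegaV k l i
      = (k:ℚ) * v i - (if i = (0 : Fin (l+1)) then (2*(k:ℚ)+2) * v 0 else 0) := by
    intro i
    simp only [omegaV]
    split_ifs with h1
    · subst h1; ring
    · ring
  rw [bform, Finset.sum_congr rfl (fun i _ => h i)]
  simp only [Finset.sum_sub_distrib, ← Finset.mul_sum,
    Finset.sum_ite_eq' Finset.univ (0 : Fin (l+1)), Finset.mem_univ, if_true, omegaV]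
  ring

lemma bform_ratOf (k l : ℕ) (v w : Fin (l+1) → ℤ) :
    bform k l (ratOf l v) (ratOf l w) = (bformZ k l v w : ℚ) := by
  simp only [bform, bformZ, ratOf]
  push_cast
  ring

/-- The root `f_j = e₀ - ∑_{i≥1, i≠j} e_i` (for `j ≠ 0`). -/
def fvec (l : ℕ) (j : Fin (l+1)) : Fin (l+1) → ℤ :=
  fun i => if i = 0 then 1 else if i = j then 0 else -1

lemma finZeroNeOne (k : ℕ) : (0 : Fin (k+3+1)) ≠ 1 := by
  simp [Fin.ext_iff]

lemma fvec_sum (k : ℕ) (j : Fin (k+3+1)) (hj : j ≠ 0) :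
    ∑ i, fvec (k+3) j i = -((k:ℤ)+1) := by
  have h : ∀ i, fvec (k+3) j i
      = ((if i = (0:Fin (k+3+1)) then 2 else 0) + (if i = j then 1 else 0) - 1) := by
    intro i
    simp only [fvec]
    split_ifs with h1 h2 <;> simp_all <;> omega
  rw [Finset.sum_congr rfl (fun i _ => h i)]
  simp [Finset.sum_add_distrib, Finset.sum_sub_distrib,
    Finset.sum_ite_eq' Finset.univ, Finset.card_univ]
  push_cast; ring

lemma fvec_sq_sum (k : ℕ) (j : Fin (k+3+1)) (hj : j ≠ 0) :
    ∑ i, fvec (k+3) j i * fvec (k+3) j i = (k:ℤ)+3 := by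
  have h : ∀ i, fvec (k+3) j i * fvec (k+3) j i
      = (1 - (if i = j then 1 else 0) : ℤ) := by
    intro i
    simp only [fvec]
    split_ifs with h1 h2 <;> simp_all <;> omega
  rw [Finset.sum_congr rfl (fun i _ => h i)]
  simp [Finset.sum_sub_distrib, Finset.sum_ite_eq' Finset.univ, Finset.card_univ]

lemma fvec_root (k : ℕ) (j : Fin (k+3+1)) (hj : j ≠ 0) :
    fvec (k+3) j ∈ rootSet k (k+3) := by
  constructor
  · rw [bformZ]
    rw [fvec_sq_sum k j hj]
    have h0 : fvec (k+3) j 0 = 1 := by simp [fvec]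
    rw [h0]; ring
  · rw [bformZ_omega, fvec_sum k j hj]
    have h0 : fvec (k+3) j 0 = 1 := by simp [fvec]
    rw [h0]; ring

/-- Explicit description of the root lattice: integer vectors `x` with
`(k+1)x₀ + ∑ᵢ xᵢ = 0`. -/
def QE (k l : ℕ) : AddSubgroup (Fin (l+1) → ℚ) where
  carrier := {x | (∀ i, ∃ n : ℤ, x i = (n:ℚ)) ∧ ((k:ℚ)+1) * x 0 + ∑ i, x i = 0}
  zero_mem' := ⟨fun i => ⟨0, by simp⟩, by simp⟩
  add_mem' := by
    rintro a b ⟨ha1, ha2⟩ ⟨hb1, hb2⟩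
    refine ⟨fun i => ?_, ?_⟩
    · obtain ⟨n, hn⟩ := ha1 i; obtain ⟨m, hm⟩ := hb1 i
      exact ⟨n + m, by simp [hn, hm]⟩
    · simp only [Pi.add_apply, Finset.sum_add_distrib]
      linarith
  neg_mem' := by
    rintro a ⟨ha1, ha2⟩
    refine ⟨fun i => (ha1 i).elim fun n hn => ⟨-n, by simp [hn]⟩, ?_⟩
    have : ∑ i, (-a) i = -∑ i, a i := by simp
    simp only [Pi.neg_apply] at this ⊢
    rw [this]; linarith

lemma rootLattice_le_QE (k l : ℕ) (hk : 1 ≤ k) : rootLattice k l ≤ QE k l := by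
  rw [rootLattice, AddSubgroup.closure_le]
  rintro _ ⟨v, hv, rfl⟩
  have h2 := hv.2
  rw [bformZ_omega] at h2
  have hk' : -(k:ℤ) ≠ 0 := by simp; omega
  have h3 : ((k:ℤ)+1) * v 0 + ∑ i, v i = 0 := by
    rcases mul_eq_zero.mp h2 with h | h
    · exact absurd h hk'
    · exact h
  show (∀ i, ∃ n : ℤ, _) ∧ _
  refine ⟨fun i => ⟨v i, rfl⟩, ?_⟩
  have := congrArg (fun z : ℤ => (z : ℚ)) h3
  push_cast at this
  simpa [ratOf] using this

lemma QE_le_rootLattice (k : ℕ) (hk : 1 ≤ k) : QE k (k+3) ≤ rootLattice k (k+3) := by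
  rintro x ⟨hint, hsum⟩
  choose n hn using hint
  -- integer sum relation
  have hsumZ : ∑ i, n i = -((k:ℤ)+1) * n 0 := by
    simp only [hn] at hsum
    have : ((∑ i, n i : ℤ) : ℚ) = ((-((k:ℤ)+1) * n 0 : ℤ) : ℚ) := by
      push_cast
      linear_combination hsum
    exact_mod_cast this
  set F : Fin (k+3+1) → ℚ := ratOf (k+3) (fvec (k+3) 1) with hF
  set G : Fin (k+3+1) → (Fin (k+3+1) → ℚ) := fun j => ratOf (k+3) (fvec (k+3) j) with hG
  set c : Fin (k+3+1) → ℤ := fun j => if j = 0 ∨ j = 1 then 0 else n j + n 0 with hc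
  have hone : (1 : Fin (k+3+1)) ≠ 0 := (finZeroNeOne k).symm
  -- sum of coefficients
  have hcsum : ∑ j, c j = -(n 1) := by
    have h : ∀ j, c j = (n j + n 0)
        - ((if j = (0:Fin (k+3+1)) then n 0 + n 0 else 0) + (if j = (1:Fin (k+3+1)) then n 1 + n 0 else 0)) := by
      intro j
      simp only [hc]
      by_cases h0 : j = 0
      · simp [h0, finZeroNeOne k]
      · by_cases h1 : j = 1
        · simp [h1, (finZeroNeOne k).symm]
        · simp [h0, h1]
    rw [Finset.sum_congr rfl (fun j _ => h j)]
    simp [Finset.sum_add_distrib, Finset.sum_sub_distrib,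
      Finset.sum_ite_eq' Finset.univ, Finset.card_univ, hsumZ]
    push_cast
    ring
  have hxeq : x = (n 0) • F + ∑ j, c j • (G j - F) := by
    funext t
    simp only [Pi.add_apply, Finset.sum_apply, zsmul_eq_mul, Pi.mul_apply,
      Pi.intCast_apply, Pi.sub_apply]
    by_cases ht0 : t = 0
    · subst ht0
      have hterm : ∀ j : Fin (k+3+1), (c j : ℚ) * (G j 0 - F 0) = 0 := by
        intro j
        have : G j 0 = 1 := by simp [hG, ratOf, fvec]
        have hF0 : F 0 = 1 := by simp [hF, ratOf, fvec]
        rw [this, hF0]; ring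
      rw [Finset.sum_congr rfl (fun j _ => hterm j)]
      simp [hF, ratOf, fvec, hn 0]
    · by_cases ht1 : t = 1
      · subst ht1
        have hF1 : F 1 = 0 := by simp [hF, ratOf, fvec, hone]
        have hterm : ∀ j : Fin (k+3+1), (c j : ℚ) * (G j 1 - F 1) = -(c j : ℚ) := by
          intro j
          by_cases hj1 : j = 1
          · simp [hj1, hc, hF1]
          · have : G j 1 = -1 := by
              simp [hG, ratOf, fvec, hone]
              intro h; exact absurd h.symm hj1
            rw [this, hF1]; ring
        rw [Finset.sum_congr rfl (fun j _ => hterm j)]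
        rw [hF1, hn 1]
        have : ∑ j, -(c j : ℚ) = -((∑ j, c j : ℤ) : ℚ) := by push_cast; simp
        rw [this, hcsum]
        push_cast; ring
      · -- t ≠ 0, t ≠ 1
        have hFt : F t = -1 := by simp [hF, ratOf, fvec, ht0, ht1]
        have hterm : ∀ j : Fin (k+3+1), (c j : ℚ) * (G j t - F t)
            = (if t = j then ((n t + n 0 : ℤ) : ℚ) else 0) := by
          intro j
          by_cases htj : t = j
          · subst htj
            have : G t t = 0 := by simp [hG, ratOf, fvec, ht0]
            rw [this, hFt, if_pos rfl]
            have hct : c t = n t + n 0 := by simp [hc, ht0, ht1]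
            rw [hct]; push_cast; ring
          · rw [if_neg htj]
            by_cases hj0 : j = 0
            · simp [hc, hj0]
            · by_cases hj1 : j = 1
              · simp [hc, hj1]
              · have : G j t = -1 := by
                  simp [hG, ratOf, fvec, ht0]
                  intro h; exact absurd h htj
                rw [this, hFt]; ring
        rw [Finset.sum_congr rfl (fun j _ => hterm j)]
        rw [Finset.sum_ite_eq Finset.univ t (fun _ => ((n t + n 0 : ℤ) : ℚ))]
        rw [hFt, hn t]
        simp
  rw [hxeq]
  have hFroot : F ∈ rootLattice k (k+3) := by
    apply AddSubgroup.subset_closure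
    exact ⟨_, fvec_root k 1 hone, rfl⟩
  refine AddSubgroup.add_mem _ (AddSubgroup.zsmul_mem _ hFroot _) ?_
  refine AddSubgroup.sum_mem _ (fun j _ => ?_)
  by_cases hj0 : j = 0
  · have : c j = 0 := by simp [hc, hj0]
    rw [this, zero_zsmul]; exact zero_mem _
  · have hGroot : G j ∈ rootLattice k (k+3) := by
      apply AddSubgroup.subset_closure
      exact ⟨_, fvec_root k j hj0, rfl⟩
    exact AddSubgroup.zsmul_mem _ (AddSubgroup.sub_mem _ hGroot hFroot) _

lemma sum_eq_of_omega (k l : ℕ) (hk : 1 ≤ k) (x : Fin (l+1) → ℚ)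
    (hx : bform k l x (omegaV k l) = 0) : ∑ i, x i = -((k:ℚ)+1) * x 0 := by
  rw [bform_omega] at hx
  have hk' : -(k:ℚ) ≠ 0 := by
    simp only [neg_ne_zero, Nat.cast_ne_zero]
    omega
  rcases mul_eq_zero.mp hx with h | h
  · exact absurd h hk'
  · linarith

lemma bform_fvec (k : ℕ) (hk : 1 ≤ k) (x : Fin (k+3+1) → ℚ)
    (hS : ∑ i, x i = -((k:ℚ)+1) * x 0) (j : Fin (k+3+1)) (hj : j ≠ 0) :
    bform k (k+3) x (ratOf (k+3) (fvec (k+3) j)) = -(2 * x 0 + x j) := by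
  have h : ∀ i, x i * ratOf (k+3) (fvec (k+3) j) i
      = ((if i = (0:Fin (k+3+1)) then 2 * x 0 else 0) + (if i = j then x j else 0) - x i) := by
    intro i
    simp only [ratOf, fvec]
    by_cases h0 : i = 0
    · subst h0
      have hne : ¬((0:Fin (k+3+1)) = j) := fun h => hj h.symm
      simp only [if_pos rfl, if_neg hne]
      push_cast
      ring
    · by_cases h1 : i = j
      · simp [h0, h1, hj]
      · simp [h0, h1]
  rw [bform, Finset.sum_congr rfl (fun i _ => h i)]
  have h0 : ratOf (k+3) (fvec (k+3) j) 0 = 1 := by simp [ratOf, fvec]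
  rw [h0]
  simp only [Finset.sum_add_distrib, Finset.sum_sub_distrib,
    Finset.sum_ite_eq' Finset.univ, Finset.mem_univ, if_true, hS]
  ring

lemma weight_int (k : ℕ) (hk : 1 ≤ k) (x : Fin (k+3+1) → ℚ)
    (hx : x ∈ weightLattice k (k+3)) :
    (∃ a : ℤ, ((k:ℚ)+4) * x 0 = (a:ℚ)) ∧
      (∀ j : Fin (k+3+1), j ≠ 0 → ∃ n : ℤ, x j + 2 * x 0 = (n:ℚ)) := by
  obtain ⟨h1, h2⟩ := hx
  have hS := sum_eq_of_omega k (k+3) hk x h1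
  have hj : ∀ j : Fin (k+3+1), j ≠ 0 → ∃ n : ℤ, x j + 2 * x 0 = (n:ℚ) := by
    intro j hj
    obtain ⟨n, hn⟩ := h2 (fvec (k+3) j) (fvec_root k j hj)
    rw [bform_fvec k hk x hS j hj] at hn
    exact ⟨-n, by push_cast; linarith⟩
  refine ⟨?_, hj⟩
  have key : ((k:ℚ)+4) * x 0 = ∑ i, (if i = (0:Fin (k+3+1)) then 0 else x i + 2 * x 0) := by
    have h : ∀ i : Fin (k+3+1), (if i = (0:Fin (k+3+1)) then (0:ℚ) else x i + 2 * x 0)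
        = (x i + 2 * x 0) - (if i = (0:Fin (k+3+1)) then x 0 + 2 * x 0 else 0) := by
      intro i
      by_cases h0 : i = 0 <;> simp [h0]
    rw [Finset.sum_congr rfl (fun i _ => h i)]
    simp only [Finset.sum_sub_distrib, Finset.sum_add_distrib,
      Finset.sum_ite_eq' Finset.univ, Finset.mem_univ, if_true, Finset.sum_const,
      Finset.card_univ, Fintype.card_fin, nsmul_eq_mul, hS]
    push_cast
    ring
  have hmem : ((k:ℚ)+4) * x 0 ∈ (⊥ : Subring ℚ) := by
    rw [key]
    refine Subring.sum_mem _ (fun i _ => ?_)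
    by_cases h0 : i = 0
    · rw [if_pos h0]; exact zero_mem _
    · obtain ⟨n, hn⟩ := hj i h0
      rw [if_neg h0, hn]
      exact intCast_mem _ n
  obtain ⟨a, ha⟩ := Subring.mem_bot.mp hmem
  exact ⟨a, ha.symm⟩

lemma key_int (k : ℕ) (hk : 1 ≤ k) (x : Fin (k+3+1) → ℚ) (a : ℤ)
    (hx0 : ((k:ℚ)+4) * x 0 = (a:ℚ))
    (hxj : ∀ j : Fin (k+3+1), j ≠ 0 → ∃ n : ℤ, x j + 2 * x 0 = (n:ℚ))
    (m : Fin (k+3+1) → ℤ) (hm : m ∈ rootSet k (k+3)) :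
    ∃ n : ℤ, bform k (k+3) x (ratOf (k+3) m) = (n:ℚ) := by
  have hm2 := hm.2
  rw [bformZ_omega] at hm2
  have hk' : -(k:ℤ) ≠ 0 := by simp; omega
  have hmz : ((k:ℤ)+1) * m 0 + ∑ i, m i = 0 := by
    rcases mul_eq_zero.mp hm2 with h | h
    · exact absurd h hk'
    · exact h
  have hmq : ((k:ℚ)+1) * (m 0 : ℚ) + ∑ i, (m i : ℚ) = 0 := by
    exact_mod_cast congrArg (fun z : ℤ => (z:ℚ)) hmz
  -- algebraic identity
  have hid : bform k (k+3) x (ratOf (k+3) m)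
      = -((a:ℚ) * (m 0 : ℚ)) - ∑ i, (if i = (0:Fin (k+3+1)) then 0 else x i + 2 * x 0) * (m i : ℚ) := by
    have h : ∀ i : Fin (k+3+1), (if i = (0:Fin (k+3+1)) then (0:ℚ) else x i + 2 * x 0) * (m i : ℚ)
        = (x i + 2 * x 0) * (m i : ℚ) - (if i = (0:Fin (k+3+1)) then (x 0 + 2 * x 0) * (m 0:ℚ) else 0) := by
      intro i
      by_cases h0 : i = 0 <;> simp [h0]
    rw [Finset.sum_congr rfl (fun i _ => h i)]
    simp only [bform, ratOf, Finset.sum_sub_distrib, add_mul, Finset.sum_add_distrib,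
      Finset.sum_ite_eq' Finset.univ, Finset.mem_univ, if_true, ← Finset.mul_sum]
    linear_combination (2 * x 0) * hmq - (m 0 : ℚ) * hx0
  rw [hid]
  have hmem : -((a:ℚ) * (m 0 : ℚ)) - ∑ i, (if i = (0:Fin (k+3+1)) then 0 else x i + 2 * x 0) * (m i : ℚ)
      ∈ (⊥ : Subring ℚ) := by
    refine Subring.sub_mem _ (Subring.neg_mem _ (Subring.mul_mem _ (intCast_mem _ a) (intCast_mem _ (m 0)))) ?_
    refine Subring.sum_mem _ (fun i _ => ?_)
    refine Subring.mul_mem _ ?_ (intCast_mem _ (m i))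
    by_cases h0 : i = 0
    · rw [if_pos h0]; exact zero_mem _
    · obtain ⟨n, hn⟩ := hxj i h0
      rw [if_neg h0, hn]
      exact intCast_mem _ n
  obtain ⟨n, hn⟩ := Subring.mem_bot.mp hmem
  exact ⟨n, hn.symm⟩

/-- Representative of the class `c` in `P/Q`. -/
def wvec (k c : ℕ) : Fin (k+3+1) → ℚ :=
  fun i => if i = 0 then (c:ℚ)/((k:ℚ)+4)
    else if i = 1 then (c:ℚ) - 2*(c:ℚ)/((k:ℚ)+4) else -(2*(c:ℚ)/((k:ℚ)+4))

lemma k4_ne (k : ℕ) : ((k:ℚ)+4) ≠ 0 := by positivity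

lemma wvec_zero (k c : ℕ) : wvec k c 0 = (c:ℚ)/((k:ℚ)+4) := by simp [wvec]

lemma wvec_apply (k c : ℕ) (j : Fin (k+3+1)) (hj : j ≠ 0) :
    wvec k c j + 2 * wvec k c 0 = (if j = 1 then (c:ℚ) else 0) := by
  rw [wvec_zero]
  simp only [wvec, if_neg hj]
  by_cases h1 : j = 1 <;> simp [h1] <;> ring

lemma wvec_sum (k c : ℕ) : ∑ i, wvec k c i = -((k:ℚ)+1) * wvec k c 0 := by
  have h : ∀ i : Fin (k+3+1), wvec k c i
      = ((if i = (0:Fin (k+3+1)) then 3*(c:ℚ)/((k:ℚ)+4) else 0)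
        + (if i = (1:Fin (k+3+1)) then (c:ℚ) else 0) - 2*(c:ℚ)/((k:ℚ)+4)) := by
    intro i
    simp only [wvec]
    by_cases h0 : i = 0
    · subst h0
      rw [if_pos rfl, if_pos rfl, if_neg (finZeroNeOne k)]
      field_simp
      ring
    · by_cases h1 : i = 1 <;> simp [h0, h1]
  rw [Finset.sum_congr rfl (fun i _ => h i), wvec_zero]
  simp only [Finset.sum_sub_distrib, Finset.sum_add_distrib,
    Finset.sum_ite_eq' Finset.univ, Finset.mem_univ, if_true, Finset.sum_const,
    Finset.card_univ, Fintype.card_fin, nsmul_eq_mul]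
  field_simp
  push_cast
  ring

lemma wvec_mem (k : ℕ) (hk : 1 ≤ k) (c : ℕ) : wvec k c ∈ weightLattice k (k+3) := by
  constructor
  · rw [bform_omega, wvec_sum]
    ring
  · intro m hm
    refine key_int k hk _ (c : ℤ) ?_ ?_ m hm
    · rw [wvec_zero]
      field_simp
      norm_cast
    · intro j hj
      rw [wvec_apply k c j hj]
      by_cases h1 : j = 1
      · exact ⟨(c:ℤ), by simp [h1]⟩
      · exact ⟨0, by simp [h1]⟩

lemma weight_reduce (k : ℕ) (hk : 1 ≤ k) (x : Fin (k+3+1) → ℚ)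
    (hx : x ∈ weightLattice k (k+3)) :
    ∃ c : ℕ, c < k + 4 ∧ -x + wvec k c ∈ QE k (k+3) := by
  obtain ⟨⟨a, ha⟩, hxj⟩ := weight_int k hk x hx
  have hS := sum_eq_of_omega k (k+3) hk x hx.1
  set c : ℕ := (a % ((k:ℤ)+4)).toNat with hcdef
  have hk4 : (0:ℤ) < (k:ℤ)+4 := by positivity
  have hcz : (c:ℤ) = a % ((k:ℤ)+4) := Int.toNat_of_nonneg (Int.emod_nonneg a (by omega))
  have hclt : c < k + 4 := by
    have := Int.emod_lt_of_pos a hk4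
    omega
  set d : ℤ := a / ((k:ℤ)+4) with hddef
  have had : a = ((k:ℤ)+4)*d + c := by
    rw [hcz]
    exact (Int.mul_ediv_add_emod a ((k:ℤ)+4)).symm
  have hadq : (a:ℚ) = ((k:ℚ)+4)*(d:ℚ) + (c:ℚ) := by exact_mod_cast had
  have hx0' : x 0 = (a:ℚ)/((k:ℚ)+4) := by
    field_simp
    linarith [ha]
  refine ⟨c, hclt, ?_, ?_⟩
  · -- integrality of each coordinate
    intro i
    by_cases h0 : i = 0
    · refine ⟨-d, ?_⟩
      subst h0
      simp only [Pi.add_apply, Pi.neg_apply, wvec_zero, hx0']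
      field_simp
      push_cast
      linear_combination -hadq
    · obtain ⟨n, hn⟩ := hxj i h0
      refine ⟨-n + (if i = (1:Fin (k+3+1)) then (c:ℤ) else 0) + 2*d, ?_⟩
      have hw := wvec_apply k c i h0
      have h2x : 2 * x 0 = 2*(a:ℚ)/((k:ℚ)+4) := by rw [hx0']; ring
      have hw0 : 2 * wvec k c 0 = 2*(c:ℚ)/((k:ℚ)+4) := by rw [wvec_zero]; ring
      simp only [Pi.add_apply, Pi.neg_apply]
      have : -x i + wvec k c i = -(x i + 2 * x 0) + (wvec k c i + 2 * wvec k c 0)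
          + (2 * x 0 - 2 * wvec k c 0) := by ring
      rw [this, hn, hw, h2x, hw0]
      have hdiff : 2*(a:ℚ)/((k:ℚ)+4) - 2*(c:ℚ)/((k:ℚ)+4) = 2*(d:ℚ) := by
        field_simp
        linear_combination hadq
      rw [hdiff]
      by_cases h1 : i = 1 <;> simp [h1] <;> push_cast <;> ring
  · -- sum condition
    have hWS := wvec_sum k c
    have : ∑ i, (-x + wvec k c) i = -∑ i, x i + ∑ i, wvec k c i := by
      simp [Finset.sum_add_distrib]
    rw [this, hS, hWS]
    simp only [Pi.add_apply, Pi.neg_apply]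
    ring

lemma wvec_inj (k : ℕ) (hk : 1 ≤ k) (c c' : ℕ) (hc : c < k+4) (hc' : c' < k+4)
    (h : -(wvec k c) + wvec k c' ∈ QE k (k+3)) : c = c' := by
  obtain ⟨n, hn⟩ := h.1 0
  simp only [Pi.add_apply, Pi.neg_apply, wvec_zero] at hn
  have : (c':ℚ) - (c:ℚ) = (n:ℚ) * ((k:ℚ)+4) := by
    field_simp at hn
    have h2 : ((c':ℚ) - (c:ℚ)) * ((k:ℚ)+4) = ((n:ℚ) * ((k:ℚ)+4)) * ((k:ℚ)+4) := by
      linear_combination ((k:ℚ)+4) * hn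
    exact mul_right_cancel₀ (k4_ne k) h2
  have hz : (c':ℤ) - (c:ℤ) = n * ((k:ℤ)+4) := by exact_mod_cast this
  have hdvd : ((k:ℤ)+4) ∣ ((c':ℤ) - (c:ℤ)) := ⟨n, by linarith⟩
  have habs : |(c':ℤ) - (c:ℤ)| < (k:ℤ)+4 := abs_lt.mpr ⟨by omega, by omega⟩
  have h0 : (c':ℤ) - (c:ℤ) = 0 := Int.eq_zero_of_abs_lt_dvd hdvd habs
  omega

lemma bform_add_left (k l : ℕ) (x y m : Fin (l+1) → ℚ) :
    bform k l (x + y) m = bform k l x m + bform k l y m := by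
  simp only [bform, Pi.add_apply, add_mul, Finset.sum_add_distrib]
  ring

lemma bform_neg_left (k l : ℕ) (x m : Fin (l+1) → ℚ) :
    bform k l (-x) m = -bform k l x m := by
  simp only [bform, Pi.neg_apply, neg_mul]
  have : ∑ i, -(x i * m i) = -∑ i, x i * m i := by simp
  rw [this]
  ring

lemma bform_omega_ratOf (k l : ℕ) (v : Fin (l+1) → ℤ) :
    bform k l (ratOf l v) (omegaV k l) = ((bformZ k l v (omegaZ k l) : ℤ) : ℚ) := by
  rw [bform_omega, bformZ_omega]
  simp only [ratOf]
  push_cast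
  ring

/-- The weight lattice as an additive subgroup. -/
def WL (k l : ℕ) : AddSubgroup (Fin (l+1) → ℚ) where
  carrier := weightLattice k l
  zero_mem' := by
    refine ⟨by simp [bform], fun m hm => ⟨0, by simp [bform]⟩⟩
  add_mem' := by
    rintro a b ⟨ha1, ha2⟩ ⟨hb1, hb2⟩
    refine ⟨by rw [bform_add_left, ha1, hb1]; ring, fun m hm => ?_⟩
    obtain ⟨p, hp⟩ := ha2 m hm
    obtain ⟨q, hq⟩ := hb2 m hm
    exact ⟨p + q, by rw [bform_add_left, hp, hq]; push_cast; ring⟩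
  neg_mem' := by
    rintro a ⟨ha1, ha2⟩
    refine ⟨by rw [bform_neg_left, ha1]; ring, fun m hm => ?_⟩
    obtain ⟨p, hp⟩ := ha2 m hm
    exact ⟨-p, by rw [bform_neg_left, hp]; push_cast; ring⟩


/-- For `l = k+3`: `Q ⊆ P` and the quotient `P/Q` (realised as the image of `P` in
`ℚ^{l+1}/Q`) is finite of order `k+4`: the index of connectedness of the root
system `A_{k+3}`. -/
theorem index_of_connectedness_k_plus_three (k : ℕ) (hk : 1 ≤ k) :
    (rootLattice k (k + 3) : Set (Fin (k + 3 + 1) → ℚ)) ⊆ weightLattice k (k + 3) ∧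
      ((QuotientAddGroup.mk : (Fin (k + 3 + 1) → ℚ) →
          (Fin (k + 3 + 1) → ℚ) ⧸ rootLattice k (k + 3)) ''
        weightLattice k (k + 3)).ncard = k + 4 := by
  classical
  constructor
  · have hle : rootLattice k (k+3) ≤ WL k (k+3) := by
      rw [rootLattice, AddSubgroup.closure_le]
      rintro _ ⟨v, hv, rfl⟩
      refine ⟨?_, fun m hm => ⟨bformZ k (k+3) v m, by rw [bform_ratOf]⟩⟩
      rw [bform_omega_ratOf, hv.2]
      norm_num
    exact hle
  · have himage : (QuotientAddGroup.mk : (Fin (k + 3 + 1) → ℚ) →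
          (Fin (k + 3 + 1) → ℚ) ⧸ rootLattice k (k + 3)) '' weightLattice k (k + 3)
        = ((Finset.range (k+4)).image
            (fun c => (QuotientAddGroup.mk (wvec k c) :
              (Fin (k + 3 + 1) → ℚ) ⧸ rootLattice k (k + 3))) : Finset _) := by
      ext q
      simp only [Set.mem_image, Finset.coe_image, Finset.mem_coe, Finset.mem_range]
      constructor
      · rintro ⟨x, hx, rfl⟩
        obtain ⟨c, hclt, hmem⟩ := weight_reduce k hk x hx
        have heq : (QuotientAddGroup.mk x :
            (Fin (k + 3 + 1) → ℚ) ⧸ rootLattice k (k + 3)) = QuotientAddGroup.mk (wvec k c) :=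
          QuotientAddGroup.eq.mpr (QE_le_rootLattice k hk hmem)
        exact ⟨c, hclt, heq.symm⟩
      · rintro ⟨c, hclt, rfl⟩
        exact ⟨wvec k c, wvec_mem k hk c, rfl⟩
    rw [himage, Set.ncard_coe_finset]
    rw [Finset.card_image_of_injOn, Finset.card_range]
    intro c hc c' hc' h
    refine wvec_inj k hk c c' (Finset.mem_range.mp hc) (Finset.mem_range.mp hc') ?_
    exact rootLattice_le_QE k (k+3) hk (QuotientAddGroup.eq.mp h)
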